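/- Let I_1, …, I_n be half-open intervals I_i = [a_i, b_i) with a_i ≤ b_i, and let f : ℝ → ℝ be non-decreasing. Then there exists an ordering α that minimizes the bottleneck value and whose first interval has minimum length, i.e., b_{α(1)} − a_{α(1)} ≤ b_j − a_j for all j ∈ {1, …, n}. -/

import Mathlib

open MeasureTheory

noncomputable def bottleneck {n : ℕ} (S : Fin n → Set ℝ) (f : ℝ → ℝ)
    (α : Equiv.Perm (Fin n)) : ℝ :=
  ⨆ k : Fin n, f ((volume (S (α k) \ ⋃ (j : Fin n) (_ : j < k), S (α j))).toReal)

theorem stmt_9 (n : ℕ) (hn : 0 < n) (a b : Fin n → ℝ) (hab : ∀ i, a i ≤ b i)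
    (f : ℝ → ℝ) (hf : Monotone f) :
    ∃ α : Equiv.Perm (Fin n),
      (∀ β : Equiv.Perm (Fin n),
        bottleneck (fun i => Set.Ico (a i) (b i)) f α ≤
        bottleneck (fun i => Set.Ico (a i) (b i)) f β) ∧
      ∀ j : Fin n, b (α ⟨0, hn⟩) - a (α ⟨0, hn⟩) ≤ b j - a j := by
  obtain ⟨N, rfl⟩ : ∃ N, n = N + 1 := ⟨n - 1, by omega⟩
  set S : Fin (N + 1) → Set ℝ := fun i => Set.Ico (a i) (b i) with hS
  -- volumes are finite
  have hvol : ∀ (i : Fin (N + 1)) (U : Set ℝ), volume (S i \ U) ≠ ⊤ := by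
    intro i U
    refine ne_top_of_le_ne_top ?_ (measure_mono Set.diff_subset)
    simp [hS, Real.volume_Ico]
  -- each term is at most the bottleneck
  have term_le : ∀ (γ : Equiv.Perm (Fin (N + 1))) (k : Fin (N + 1)),
      f ((volume (S (γ k) \ ⋃ (j : Fin (N + 1)) (_ : j < k), S (γ j))).toReal)
        ≤ bottleneck S f γ := by
    intro γ k
    have hb : BddAbove (Set.range fun k : Fin (N + 1) =>
        f ((volume (S (γ k) \ ⋃ (j : Fin (N + 1)) (_ : j < k), S (γ j))).toReal)) :=
      Set.Finite.bddAbove (Set.finite_range _)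
    exact le_ciSup hb k
  obtain ⟨m, hm⟩ := Finite.exists_min (fun i : Fin (N + 1) => b i - a i)
  obtain ⟨β, hβ⟩ := Finite.exists_min (bottleneck S f)
  set k0 : Fin (N + 1) := β⁻¹ m with hk0
  set c : Equiv.Perm (Fin (N + 1)) := (Fin.cycleRange k0)⁻¹ with hc
  have hcapp : ∀ x y : Fin (N + 1), Fin.cycleRange k0 y = x → c x = y := by
    intro x y h
    rw [hc, Equiv.Perm.inv_def, Equiv.symm_apply_eq, h]
  have hc0 : c ⟨0, hn⟩ = k0 := by
    refine hcapp _ _ ?_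
    rw [Fin.cycleRange_self]
    rfl
  have hcmid : ∀ p : Fin (N + 1), 0 < p.val → p.val ≤ k0.val →
      c p = ⟨p.val - 1, by omega⟩ := by
    intro p h0 hk
    refine hcapp _ _ ?_
    have hlt : (⟨p.val - 1, by omega⟩ : Fin (N + 1)) < k0 := by
      simp only [Fin.lt_def]
      omega
    rw [Fin.cycleRange_of_lt hlt]
    apply Fin.ext
    have hlast : (⟨p.val - 1, by omega⟩ : Fin (N + 1)) < Fin.last N := by
      show p.val - 1 < N
      have := k0.isLt
      omega
    rw [Fin.val_add_one_of_lt hlast]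
    show p.val - 1 + 1 = p.val
    omega
  have hchigh : ∀ x : Fin (N + 1), k0 < x → c x = x := by
    intro x hx
    exact hcapp _ _ (Fin.cycleRange_of_gt hx)
  set α : Equiv.Perm (Fin (N + 1)) := β * c with hα
  have hα0 : α ⟨0, hn⟩ = m := by
    rw [hα, Equiv.Perm.mul_apply, hc0, hk0, ← Equiv.Perm.mul_apply β, mul_inv_cancel, Equiv.Perm.one_apply]
  -- union monotonicity helper
  have hU : ∀ (γ δ : Equiv.Perm (Fin (N + 1))) (k l : Fin (N + 1)),
      (∀ j < k, ∃ j', j' < l ∧ γ j = δ j') →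
      (⋃ (j : Fin (N + 1)) (_ : j < k), S (γ j)) ⊆
        ⋃ (j : Fin (N + 1)) (_ : j < l), S (δ j) := by
    intro γ δ k l h
    refine Set.iUnion₂_subset fun j hj => ?_
    obtain ⟨j', hj', he⟩ := h j hj
    rw [he]
    intro x hx
    exact Set.mem_iUnion₂.mpr ⟨j', hj', hx⟩
  -- measure-term comparison helper
  have hterm : ∀ (γ δ : Equiv.Perm (Fin (N + 1))) (k l : Fin (N + 1)), γ k = δ l →
      ((⋃ (j : Fin (N + 1)) (_ : j < l), S (δ j)) ⊆
        ⋃ (j : Fin (N + 1)) (_ : j < k), S (γ j)) →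
      f ((volume (S (γ k) \ ⋃ (j : Fin (N + 1)) (_ : j < k), S (γ j))).toReal)
        ≤ f ((volume (S (δ l) \ ⋃ (j : Fin (N + 1)) (_ : j < l), S (δ j))).toReal) := by
    intro γ δ k l he hsub
    apply hf
    apply ENNReal.toReal_mono (hvol _ _)
    apply measure_mono
    rw [he]
    exact Set.diff_subset_diff_right hsub
  have key : bottleneck S f α ≤ bottleneck S f β := by
    unfold bottleneck
    apply ciSup_le
    intro k
    rcases Nat.lt_or_ge 0 k.val with h0 | h0
    · rcases Nat.lt_or_ge k0.val k.val with hk | hk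
      · -- high case: k0 < k, terms equal
        have hkk : k0 < k := hk
        refine le_trans (le_of_eq ?_) (term_le β k)
        have hck : α k = β k := by rw [hα, Equiv.Perm.mul_apply, hchigh k hkk]
        have hUeq : (⋃ (j : Fin (N + 1)) (_ : j < k), S (α j))
            = ⋃ (j : Fin (N + 1)) (_ : j < k), S (β j) := by
          apply Set.Subset.antisymm
          · apply hU
            intro j hj
            refine ⟨c j, ?_, by rw [hα, Equiv.Perm.mul_apply]⟩
            rcases Nat.eq_zero_or_pos j.val with hj0 | hj0
            · have hj' : j = ⟨0, hn⟩ := Fin.ext hj0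
              rw [hj', hc0]
              exact hkk
            · rcases Nat.lt_or_ge k0.val j.val with hj1 | hj1
              · rw [hchigh j hj1]; exact hj
              · rw [hcmid j hj0 hj1]
                show j.val - 1 < k.val
                have : j.val < k.val := hj
                omega
          · apply hU
            intro j hj
            refine ⟨c⁻¹ j, ?_, by rw [hα, Equiv.Perm.mul_apply, ← Equiv.Perm.mul_apply c, mul_inv_cancel, Equiv.Perm.one_apply]⟩
            have hcinv : c⁻¹ j = Fin.cycleRange k0 j := by rw [hc, inv_inv]
            rw [hcinv]
            rcases lt_trichotomy j k0 with hj1 | hj1 | hj1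
            · rw [Fin.cycleRange_of_lt hj1]
              have h1 : (j + 1).val = j.val + 1 :=
                Fin.val_add_one_of_lt (hj1.trans_le (Fin.le_last k0))
              have h2 : j.val < k0.val := hj1
              show (j + 1).val < k.val
              omega
            · rw [hj1, Fin.cycleRange_self]
              show (0 : Fin (N + 1)).val < k.val
              simp only [Fin.val_zero]
              omega
            · rw [Fin.cycleRange_of_gt hj1]; exact hj
        rw [hck, hUeq]
      · -- middle case: 0 < k ≤ k0
        have hkprev : k.val - 1 < N + 1 := by omega
        refine le_trans (hterm α β k ⟨k.val - 1, hkprev⟩ ?_ ?_) (term_le β _)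
        · rw [hα, Equiv.Perm.mul_apply, hcmid k h0 hk]
        · apply hU
          intro j hj
          have hj2 : j.val < k.val - 1 := hj
          have hjv : j.val + 1 < N + 1 := by
            have := k.isLt
            omega
          refine ⟨⟨j.val + 1, hjv⟩, ?_, ?_⟩
          · show j.val + 1 < k.val
            omega
          · rw [hα, Equiv.Perm.mul_apply,
              hcmid ⟨j.val + 1, hjv⟩ (Nat.succ_pos _)
                (show j.val + 1 ≤ k0.val by omega)]
            congr 1
    · -- k = 0 case
      have hk00 : k = ⟨0, hn⟩ := Fin.ext (show k.val = 0 by omega)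
      subst hk00
      have hempty : ∀ γ : Equiv.Perm (Fin (N + 1)),
          (⋃ (j : Fin (N + 1)) (_ : j < (⟨0, hn⟩ : Fin (N + 1))), S (γ j)) = ∅ := by
        intro γ
        apply Set.eq_empty_iff_forall_notMem.mpr
        intro x hx
        obtain ⟨j, hj, -⟩ := Set.mem_iUnion₂.mp hx
        simp only [Fin.lt_def] at hj
        omega
      rw [hempty α]
      refine le_trans ?_ (term_le β ⟨0, hn⟩)
      rw [hempty β]
      simp only [Set.diff_empty]
      apply hf
      have hlen : ∀ i : Fin (N + 1), (volume (S i)).toReal = b i - a i := by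
        intro i
        rw [hS]
        simp only [Real.volume_Ico]
        exact ENNReal.toReal_ofReal (sub_nonneg.mpr (hab i))
      rw [hlen, hlen, hα0]
      exact hm (β ⟨0, hn⟩)
  exact ⟨α, fun γ => key.trans (hβ γ), fun j => by rw [hα0]; exact hm j⟩
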